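/- Let A, B, C, D ∈ ℂ with C ≠ 0, and suppose that either (i) A ≠ 1 and D = conj(B)·(1 − A)·(1 − conj(A))^{−1}, or (ii) A = 1 and |D| ≤ |B|. Set ψ(z) = C·e^{Dz}, φ(z) = Az + B, ψ̂(z) = conj(C)·e^{conj(B)·z}, φ̂(z) = conj(A)·z + conj(D). Then for every entire function f : ℂ → ℂ, ∫_ℂ |ψ̂(z)·f(φ̂(z))|²·e^{−|z|²} dV(z) ≥ ∫_ℂ |ψ(z)·f(φ(z))|²·e^{−|z|²} dV(z) (as an inequality in [0,∞]). (This is the cohyponormality inequality ‖W*f‖ ≥ ‖Wf‖ for the maximal weighted composition operator W = W_{ψ,φ,max}, whose adjoint is W_{ψ̂,φ̂,max}.) -/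

import Mathlib

open MeasureTheory Complex ComplexConjugate

/-- the cohyponormality inequality `‖W* f‖ ≥ ‖W f‖` (as integrals in `[0,∞]`)
under condition (i) `A ≠ 1` and `D = B̄(1-A)(1-Ā)⁻¹`, or (ii) `A = 1` and `|D| ≤ |B|`. -/
theorem wco_cohyponormal_inequality (A B C D : ℂ) (hC : C ≠ 0)
    (hcond : (A ≠ 1 ∧ D = conj B * (1 - A) * (1 - conj A)⁻¹) ∨
      (A = 1 ∧ ‖D‖ ≤ ‖B‖))
    (ψ φ ψh φh : ℂ → ℂ)
    (hψ : ∀ z : ℂ, ψ z = C * Complex.exp (D * z))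
    (hφ : ∀ z : ℂ, φ z = A * z + B)
    (hψh : ∀ z : ℂ, ψh z = conj C * Complex.exp (conj B * z))
    (hφh : ∀ z : ℂ, φh z = conj A * z + conj D) :
    ∀ f : ℂ → ℂ, Differentiable ℂ f →
      ∫⁻ z : ℂ, ENNReal.ofReal
          ((‖ψ z * f (φ z)‖) ^ 2 * Real.exp (-(‖z‖) ^ 2)) ≤
        ∫⁻ z : ℂ, ENNReal.ofReal
          ((‖ψh z * f (φh z)‖) ^ 2 * Real.exp (-(‖z‖) ^ 2)) := by
  intro f hf
  have hfc : Continuous f := hf.continuous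
  simp only [hψ, hφ, hψh, hφh]
  -- unify the two conditions
  have key : (1 - A) * conj D = B * (1 - conj A) ∧ ‖D‖ ≤ ‖B‖ := by
    rcases hcond with ⟨hA1, hD⟩ | ⟨hA1, hD⟩
    · have hA1' : (1 : ℂ) - A ≠ 0 := sub_ne_zero.mpr (Ne.symm hA1)
      have hA1c : (1 : ℂ) - conj A ≠ 0 := by
        intro h
        apply hA1'
        have := congrArg (starRingEnd ℂ) h
        simpa using this
      constructor
      · rw [hD]
        field_simp
        simp only [map_div₀, map_mul, map_sub, map_one, Complex.conj_conj]
        rw [mul_div_assoc', div_eq_iff hA1']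
        ring
      · rw [hD]
        have habs : ‖1 - conj A‖ = ‖1 - A‖ := by
          rw [show (1 : ℂ) - conj A = conj (1 - A) by simp, Complex.norm_conj]
        rw [norm_mul, norm_mul, norm_inv, Complex.norm_conj, habs]
        rw [mul_assoc, mul_inv_cancel₀ (by simp [sub_eq_zero]; exact fun h => hA1 h.symm), mul_one]
    · refine ⟨?_, hD⟩
      rw [hA1]
      simp
  obtain ⟨hlin, hDB⟩ := key
  by_cases hA : A = 0
  · -- degenerate case: the two integrands coincide
    have hDb : D = conj B := by
      have : conj D = B := by simpa [hA] using hlin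
      rw [← this, Complex.conj_conj]
    apply le_of_eq
    apply lintegral_congr
    intro z
    rw [hA, hDb]
    simp [map_mul, Complex.norm_conj, Complex.conj_conj]
  · -- main case: change of variables w ↦ a w + b with a = Ā/A, b = (D̄ - B)/A
    set a : ℂ := conj A / A with ha_def
    set b : ℂ := (conj D - B) / A with hb_def
    have haabs : ‖a‖ = 1 := by
      simp [ha_def, norm_div, Complex.norm_conj, div_self, hA]
    have hans : Complex.normSq a = 1 := by
      rw [← Complex.sq_norm, haabs, one_pow]
    have hnB : Complex.normSq D ≤ Complex.normSq B := by
      rw [← Complex.sq_norm, ← Complex.sq_norm]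
      exact pow_le_pow_left₀ (norm_nonneg _) hDB 2
    -- the affine map is measure preserving
    have hac : (a : ℂ) ∈ Metric.sphere (0 : ℂ) 1 := by
      simpa [mem_sphere_zero_iff_norm] using haabs
    have hmp : MeasurePreserving (fun w : ℂ => a * w + b) volume volume := by
      have h := (measurePreserving_add_right (volume : Measure ℂ) b).comp
          (rotation (⟨a, hac⟩ : Circle)).measurePreserving
      convert h using 1
      · rfl
      · funext w
        simp [rotation_apply]
        exact (rotation_apply (⟨a, hac⟩ : Circle) w).symm
    have hL : Measurable (fun z : ℂ => ENNReal.ofReal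
        ((‖C * Complex.exp (D * z) * f (A * z + B)‖) ^ 2
          * Real.exp (-(‖z‖) ^ 2))) := by
      fun_prop
    calc
      ∫⁻ z : ℂ, ENNReal.ofReal
          ((‖C * Complex.exp (D * z) * f (A * z + B)‖) ^ 2
            * Real.exp (-(‖z‖) ^ 2))
          = ∫⁻ w : ℂ, ENNReal.ofReal
          ((‖C * Complex.exp (D * (a * w + b)) * f (A * (a * w + b) + B)‖) ^ 2
            * Real.exp (-(‖a * w + b‖) ^ 2)) := (hmp.lintegral_comp hL).symm
      _ ≤ ∫⁻ z : ℂ, ENNReal.ofReal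
          ((‖conj C * Complex.exp (conj B * z) * f (conj A * z + conj D)‖) ^ 2
            * Real.exp (-(‖z‖) ^ 2)) := by
        apply lintegral_mono
        intro w
        apply ENNReal.ofReal_le_ofReal
        set u : ℂ := a * w + b with hu_def
        have hφeq : A * u + B = conj A * w + conj D := by
          rw [hu_def, ha_def, hb_def]
          field_simp
          ring
        have h3 : u - conj D = a * (w - B) := by
          rw [hu_def, ha_def, hb_def]
          field_simp
          linear_combination hlin
        have h4 : Complex.normSq (u - conj D) = Complex.normSq (w - B) := by
          rw [h3, Complex.normSq_mul, hans, one_mul]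
        have h1 : Complex.normSq (u - conj D)
            = Complex.normSq u + Complex.normSq D - 2 * (D * u).re := by
          rw [Complex.normSq_sub, Complex.normSq_conj, Complex.conj_conj, mul_comm u D]
        have h2 : Complex.normSq (w - B)
            = Complex.normSq w + Complex.normSq B - 2 * (conj B * w).re := by
          rw [Complex.normSq_sub, mul_comm w (conj B)]
        have hre : 2 * (D * u).re - Complex.normSq u
            ≤ 2 * (conj B * w).re - Complex.normSq w := by linarith
        have hexp : Real.exp ((D * u).re) ^ 2 * Real.exp (-(Complex.normSq u))
            ≤ Real.exp ((conj B * w).re) ^ 2 * Real.exp (-(Complex.normSq w)) := by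
          rw [← Real.exp_nat_mul, ← Real.exp_nat_mul, ← Real.exp_add, ← Real.exp_add]
          apply Real.exp_le_exp.mpr
          push_cast
          linarith
        rw [hφeq]
        rw [norm_mul, norm_mul, norm_mul, norm_mul, Complex.norm_conj,
          Complex.norm_exp, Complex.norm_exp, Complex.sq_norm, Complex.sq_norm]
        calc
          (‖C‖ * Real.exp ((D * u).re) * ‖f (conj A * w + conj D)‖) ^ 2
              * Real.exp (-Complex.normSq u)
              = (‖C‖ ^ 2 * ‖f (conj A * w + conj D)‖ ^ 2)
                * (Real.exp ((D * u).re) ^ 2 * Real.exp (-(Complex.normSq u))) := by ring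
          _ ≤ (‖C‖ ^ 2 * ‖f (conj A * w + conj D)‖ ^ 2)
                * (Real.exp ((conj B * w).re) ^ 2 * Real.exp (-(Complex.normSq w))) := by
              apply mul_le_mul_of_nonneg_left hexp (by positivity)
          _ = (‖C‖ * Real.exp ((conj B * w).re)
                * ‖f (conj A * w + conj D)‖) ^ 2
                * Real.exp (-Complex.normSq w) := by ring
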